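/- Let n be a positive integer and g a nonnegative integer with gcd(n,g)=1. Then the spectral norm of the g-circulant matrix C_{n,g}(J) with first row (J_1,J_2,…,J_n) equals (J_{n+2} − 1)/2. -/

import Mathlib

/-- The `g`-circulant matrix of size `n` with first row `(a 0, a 1, …, a (n-1))`:
its `(i,j)` entry (0-indexed) equals `a ((j - i*g) mod n)`. -/
def gCirc {α : Type*} (n g : ℕ) (a : ℕ → α) : Matrix (Fin n) (Fin n) α :=
  Matrix.of fun i j => a ((j.val + (n - (i.val * g) % n)) % n)

/-- The spectral norm (operator 2-norm) of a real square matrix. -/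
noncomputable def matrixSpectralNorm {n : ℕ} (A : Matrix (Fin n) (Fin n) ℝ) : ℝ :=
  ‖Matrix.toEuclideanCLM (𝕜 := ℝ) A‖

/-- If a nonnegative matrix has all row sums and all column sums equal to `s`, then its
spectral norm equals `s`. -/
lemma spectralNorm_of_row_col_sums {n : ℕ} (hn : 0 < n) (A : Matrix (Fin n) (Fin n) ℝ)
    (s : ℝ) (hpos : ∀ i j, 0 ≤ A i j)
    (hrow : ∀ i, ∑ j, A i j = s) (hcol : ∀ j, ∑ i, A i j = s) :
    matrixSpectralNorm A = s := by
  have hs : 0 ≤ s := by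
    rw [← hrow ⟨0, hn⟩]; exact Finset.sum_nonneg fun j _ => hpos _ j
  set T := Matrix.toEuclideanCLM (𝕜 := ℝ) A with hT
  have hTapp : ∀ (x : EuclideanSpace ℝ (Fin n)) (i : Fin n),
      (T x) i = ∑ j, A i j * x j := by
    intro x i
    have : (T x) i = (Matrix.toLin' A (WithLp.equiv 2 (Fin n → ℝ) x)) i := by
      rw [hT, Matrix.ofLp_toEuclideanCLM]
      rfl
    rw [this, Matrix.toLin'_apply, Matrix.mulVec, dotProduct]
    rfl
  have keynorm : ∀ x : EuclideanSpace ℝ (Fin n), ‖T x‖ ≤ s * ‖x‖ := by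
    intro x
    have hnx : ‖x‖ = Real.sqrt (∑ j, (x j) ^ 2) := by
      rw [EuclideanSpace.norm_eq]
      congr 1
      exact Finset.sum_congr rfl fun j _ => by rw [Real.norm_eq_abs, sq_abs]
    have hnTx : ‖T x‖ = Real.sqrt (∑ i, ((T x) i) ^ 2) := by
      rw [EuclideanSpace.norm_eq]
      congr 1
      exact Finset.sum_congr rfl fun i _ => by rw [Real.norm_eq_abs, sq_abs]
    -- Cauchy-Schwarz per row
    have hCS : ∀ i : Fin n, ((T x) i) ^ 2 ≤ s * ∑ j, A i j * (x j) ^ 2 := by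
      intro i
      rw [hTapp x i]
      have h1 : (∑ j, A i j * x j) ^ 2 ≤ (∑ j, A i j) * ∑ j, A i j * (x j) ^ 2 := by
        have := Finset.sum_mul_sq_le_sq_mul_sq Finset.univ
          (fun j => Real.sqrt (A i j)) (fun j => Real.sqrt (A i j) * x j)
        calc (∑ j, A i j * x j) ^ 2
            = (∑ j, Real.sqrt (A i j) * (Real.sqrt (A i j) * x j)) ^ 2 := by
              congr 1; apply Finset.sum_congr rfl; intro j _
              rw [← mul_assoc, Real.mul_self_sqrt (hpos i j)]
          _ ≤ (∑ j, Real.sqrt (A i j) ^ 2) * ∑ j, (Real.sqrt (A i j) * x j) ^ 2 := this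
          _ = (∑ j, A i j) * ∑ j, A i j * (x j) ^ 2 := by
              congr 1
              · apply Finset.sum_congr rfl; intro j _; rw [Real.sq_sqrt (hpos i j)]
              · apply Finset.sum_congr rfl; intro j _
                rw [mul_pow, Real.sq_sqrt (hpos i j)]
      rw [hrow i] at h1
      exact h1
    have hsum : ∑ i, ((T x) i) ^ 2 ≤ s ^ 2 * ∑ j, (x j) ^ 2 := by
      calc ∑ i, ((T x) i) ^ 2 ≤ ∑ i : Fin n, (s * ∑ j, A i j * (x j) ^ 2) :=
            Finset.sum_le_sum fun i _ => hCS i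
        _ = s * ∑ j, (∑ i, A i j) * (x j) ^ 2 := by
            rw [← Finset.mul_sum]
            congr 1
            rw [Finset.sum_comm]
            apply Finset.sum_congr rfl; intro j _
            rw [Finset.sum_mul]
        _ = s ^ 2 * ∑ j, (x j) ^ 2 := by
            rw [Finset.mul_sum, Finset.mul_sum]
            apply Finset.sum_congr rfl; intro j _
            rw [hcol j]; ring
    rw [hnTx, hnx]
    calc Real.sqrt (∑ i, ((T x) i) ^ 2) ≤ Real.sqrt (s ^ 2 * ∑ j, (x j) ^ 2) :=
          Real.sqrt_le_sqrt hsum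
      _ = s * Real.sqrt (∑ j, (x j) ^ 2) := by
          rw [Real.sqrt_mul (sq_nonneg s), Real.sqrt_sq hs]
  have upper : matrixSpectralNorm A ≤ s := ContinuousLinearMap.opNorm_le_bound T hs keynorm
  -- lower bound: apply to the all-ones vector
  have lower : s ≤ matrixSpectralNorm A := by
    set v : EuclideanSpace ℝ (Fin n) := (WithLp.equiv 2 (Fin n → ℝ)).symm (fun _ => 1) with hv
    have hvj : ∀ j : Fin n, v j = 1 := fun j => rfl
    have hTv : ∀ i : Fin n, (T v) i = s := by
      intro i
      rw [hTapp v i]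
      simp only [hvj, mul_one]
      exact hrow i
    have hnv : ‖v‖ = Real.sqrt n := by
      rw [EuclideanSpace.norm_eq]
      simp [hvj]
    have hnTv : ‖T v‖ = s * Real.sqrt n := by
      rw [EuclideanSpace.norm_eq]
      have : ∀ i : Fin n, ‖(T v) i‖ ^ 2 = s ^ 2 := by
        intro i; rw [Real.norm_eq_abs, sq_abs, hTv i]
      rw [Finset.sum_congr rfl fun i _ => this i]
      simp only [Finset.sum_const, Finset.card_univ, Fintype.card_fin, nsmul_eq_mul]
      rw [Real.sqrt_mul (by positivity), Real.sqrt_sq hs, mul_comm]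
    have h := T.le_opNorm v
    rw [hnTv, hnv] at h
    have hsq : (0:ℝ) < Real.sqrt n := Real.sqrt_pos.2 (by exact_mod_cast hn)
    exact le_of_mul_le_mul_right h hsq
  linarith

/-- Shift-sum lemma: summing `f ((j + c) % n)` over `j : Fin n` gives the same as
summing `f j`. -/
lemma sum_shift_mod {n : ℕ} (hn : 0 < n) (f : ℕ → ℝ) (c : ℕ) :
    ∑ j : Fin n, f ((j.val + c) % n) = ∑ j : Fin n, f j.val := by
  have e : Fin n → Fin n := fun j => ⟨(j.val + c) % n, Nat.mod_lt _ hn⟩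
  have hinj : Function.Injective (fun j : Fin n => (⟨(j.val + c) % n, Nat.mod_lt _ hn⟩ : Fin n)) := by
    intro j k h
    have h' : (j.val + c) % n = (k.val + c) % n := congrArg Fin.val h
    have hm : j.val % n = k.val % n := Nat.ModEq.add_right_cancel' c h'
    rw [Nat.mod_eq_of_lt j.isLt, Nat.mod_eq_of_lt k.isLt] at hm
    exact Fin.ext hm
  have hbij := hinj.bijective_of_finite
  exact Fintype.sum_bijective _ hbij _ _ (fun j => rfl)

theorem sum_jacobsthal (J : ℕ → ℝ) (hJ0 : J 0 = 0) (hJ1 : J 1 = 1)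
    (hrec : ∀ m : ℕ, J (m + 2) = J (m + 1) + 2 * J m) :
    ∀ N : ℕ, ∑ m ∈ Finset.range N, J (m + 1) = (J (N + 2) - 1) / 2 := by
  intro N
  induction N with
  | zero => simp [hrec 0, hJ0, hJ1]
  | succ k ih =>
    rw [Finset.sum_range_succ, ih, hrec (k + 1)]
    ring

/-- Spectral norm of the g-circulant matrix of Jacobsthal numbers. -/
theorem spectralNorm_gCirc_jacobsthal
    (J : ℕ → ℝ) (hJ0 : J 0 = 0) (hJ1 : J 1 = 1)
    (hrec : ∀ m : ℕ, J (m + 2) = J (m + 1) + 2 * J m)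
    (n r : ℕ) (hn : 0 < n) (hgcd : Nat.gcd n r = 1) :
    matrixSpectralNorm (gCirc n r (fun m => J (m + 1))) = (J (n + 2) - 1) / 2 := by
  -- Jacobsthal numbers are nonnegative
  have hJnn : ∀ m, 0 ≤ J m := by
    have key : ∀ m, 0 ≤ J m ∧ 0 ≤ J (m + 1) := by
      intro m
      induction m with
      | zero => exact ⟨by rw [hJ0], by rw [hJ1]; norm_num⟩
      | succ k ih => exact ⟨ih.2, by rw [hrec k]; linarith [ih.1, ih.2]⟩
    exact fun m => (key m).1
  set s : ℝ := (J (n + 2) - 1) / 2 with hs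
  have hsum : ∑ m ∈ Finset.range n, J (m + 1) = s := sum_jacobsthal J hJ0 hJ1 hrec n
  apply spectralNorm_of_row_col_sums hn _ s
  · intro i j
    exact hJnn _
  · -- row sums
    intro i
    have := sum_shift_mod hn (fun m => J (m + 1)) (n - (i.val * r) % n)
    exact this.trans (by rw [Fin.sum_univ_eq_sum_range (fun m => J (m + 1)) n]; exact hsum)
  · -- column sums
    intro j
    have hinj : Function.Injective (fun i : Fin n =>
        (⟨(j.val + (n - (i.val * r) % n)) % n, Nat.mod_lt _ hn⟩ : Fin n)) := by
      intro i k h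
      have h' : (j.val + (n - (i.val * r) % n)) % n
          = (j.val + (n - (k.val * r) % n)) % n := congrArg Fin.val h
      have h1 : (n - (i.val * r) % n) % n = (n - (k.val * r) % n) % n :=
        Nat.ModEq.add_left_cancel' j.val h'
      set a := (i.val * r) % n with ha
      set b := (k.val * r) % n with hb
      have haltn : a < n := Nat.mod_lt _ hn
      have hbltn : b < n := Nat.mod_lt _ hn
      -- from n - a ≡ n - b [MOD n] derive a ≡ b [MOD n]
      have h2 : (n - a + (a + b)) % n = (n - b + (a + b)) % n :=
        Nat.ModEq.add_right (a + b) h1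
      have e1 : n - a + (a + b) = n + b := by omega
      have e2 : n - b + (a + b) = n + a := by omega
      rw [e1, e2] at h2
      have h3 : b % n = a % n := Nat.ModEq.add_left_cancel' n h2
      rw [Nat.mod_eq_of_lt haltn, Nat.mod_eq_of_lt hbltn] at h3
      -- so i*r ≡ k*r [MOD n]
      have h4 : i.val * r ≡ k.val * r [MOD n] := by
        unfold Nat.ModEq
        rw [← ha, ← hb, h3]
      have h5 : i.val ≡ k.val [MOD n] := Nat.ModEq.cancel_right_of_coprime hgcd h4
      have := h5
      unfold Nat.ModEq at this
      rw [Nat.mod_eq_of_lt i.isLt, Nat.mod_eq_of_lt k.isLt] at this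
      exact Fin.ext this
    have hbij := hinj.bijective_of_finite
    have := Fintype.sum_bijective _ hbij
      (fun i : Fin n => J (((j.val + (n - (i.val * r) % n)) % n) + 1))
      (fun m : Fin n => J (m.val + 1)) (fun i => rfl)
    exact this.trans (by rw [Fin.sum_univ_eq_sum_range (fun m => J (m + 1)) n]; exact hsum)
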